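/- Let S ⊂ ℝ² be a domain, a ∈ ℝ, and suppose u, v ∈ C²(S) satisfy ∂u/∂x = ∂v/∂y and ∂v/∂x = −2(v² + y² + a²)^{1/2} ∂u/∂y on S. Then v satisfies ∂/∂x[(v² + y² + a²)^{−1/2} ∂v/∂x] + 2 ∂²v/∂y² = 0 on the interior of S. -/

import Mathlib

open Set Filter Topology

/-- The divergence-form quasilinear operator
`Q(v) = ∂/∂x[(v² + y² + a²)^{-1/2} ∂v/∂x] + 2 ∂²v/∂y²`. -/
noncomputable def Qop (a : ℝ) (v : ℝ × ℝ → ℝ) (p : ℝ × ℝ) : ℝ :=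
  fderiv ℝ (fun q => ((v q) ^ 2 + q.2 ^ 2 + a ^ 2) ^ (-(1 : ℝ) / 2)
      * fderiv ℝ v q ((1 : ℝ), (0 : ℝ))) p ((1 : ℝ), (0 : ℝ))
  + 2 * fderiv ℝ (fun q => fderiv ℝ v q ((0 : ℝ), (1 : ℝ))) p ((0 : ℝ), (1 : ℝ))


lemma eval_fderiv_fderiv {g : ℝ × ℝ → ℝ} {p : ℝ × ℝ}
    (hd : DifferentiableAt ℝ (fderiv ℝ g) p) (e w : ℝ × ℝ) :
    fderiv ℝ (fun q => fderiv ℝ g q e) p w = fderiv ℝ (fderiv ℝ g) p w e := by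
  rw [fderiv_clm_apply hd (differentiableAt_const e)]
  simp

lemma line_hasDerivAt {g : ℝ × ℝ → ℝ} {x t : ℝ} (hg : DifferentiableAt ℝ g (x, t)) :
    HasDerivAt (fun s => g (x, s)) (fderiv ℝ g (x, t) ((0 : ℝ), (1 : ℝ))) t := by
  have hline : HasDerivAt (fun s : ℝ => ((x, s) : ℝ × ℝ)) ((0 : ℝ), (1 : ℝ)) t :=
    (hasDerivAt_const _ _).prodMk (hasDerivAt_id _)
  exact hg.hasFDerivAt.comp_hasDerivAt t hline

/-- At an interior degenerate point of the nonlinear CR system (with `a = 0`),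
`∂u/∂y` must vanish. -/
lemma key_deg (Uo : Set (ℝ × ℝ)) (hUo : IsOpen Uo) (u v : ℝ × ℝ → ℝ)
    (hu : ContDiffOn ℝ 2 u Uo) (hv : ContDiffOn ℝ 2 v Uo)
    (O : Set (ℝ × ℝ)) (hO : IsOpen O) (hOU : O ⊆ Uo)
    (hCR2 : ∀ q ∈ O, fderiv ℝ v q ((1 : ℝ), (0 : ℝ)) =
      -2 * Real.sqrt ((v q) ^ 2 + q.2 ^ 2) * fderiv ℝ u q ((0 : ℝ), (1 : ℝ)))
    (x0 : ℝ) (hp : (x0, (0 : ℝ)) ∈ O) (hvp : v (x0, 0) = 0) :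
    fderiv ℝ u (x0, (0 : ℝ)) ((0 : ℝ), (1 : ℝ)) = 0 := by
  have hUmem : Uo ∈ 𝓝 ((x0, (0:ℝ)) : ℝ × ℝ) := hUo.mem_nhds (hOU hp)
  have huC1 : ContDiffOn ℝ 1 (fun q => fderiv ℝ u q) Uo :=
    hu.fderiv_of_isOpen hUo (by norm_num)
  have hvC1 : ContDiffOn ℝ 1 (fun q => fderiv ℝ v q) Uo :=
    hv.fderiv_of_isOpen hUo (by norm_num)
  have hdFv : DifferentiableAt ℝ (fderiv ℝ v) (x0, (0:ℝ)) :=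
    (hvC1.contDiffAt hUmem).differentiableAt one_ne_zero
  have hdFu : DifferentiableAt ℝ (fderiv ℝ u) (x0, (0:ℝ)) :=
    (huC1.contDiffAt hUmem).differentiableAt one_ne_zero
  have hvx_diff : DifferentiableAt ℝ (fun q => fderiv ℝ v q ((1:ℝ),(0:ℝ))) (x0, (0:ℝ)) :=
    hdFv.clm_apply (differentiableAt_const _)
  have huy_diff : DifferentiableAt ℝ (fun q => fderiv ℝ u q ((0:ℝ),(1:ℝ))) (x0, (0:ℝ)) :=
    hdFu.clm_apply (differentiableAt_const _)
  set φ : ℝ → ℝ := fun t => fderiv ℝ v (x0, t) ((1:ℝ),(0:ℝ)) with hφdef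
  set W : ℝ → ℝ := fun t => fderiv ℝ u (x0, t) ((0:ℝ),(1:ℝ)) with hWdef
  set D : ℝ := fderiv ℝ (fun q => fderiv ℝ v q ((1:ℝ),(0:ℝ))) (x0, (0:ℝ)) ((0:ℝ),(1:ℝ)) with hDdef
  set c : ℝ := fderiv ℝ v (x0, (0:ℝ)) ((0:ℝ),(1:ℝ)) with hcdef
  have hφ : HasDerivAt φ D 0 := line_hasDerivAt hvx_diff
  have hvdiff : DifferentiableAt ℝ v (x0, (0:ℝ)) :=
    (hv.contDiffAt hUmem).differentiableAt two_ne_zero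
  have hV : HasDerivAt (fun t => v (x0, t)) c 0 := line_hasDerivAt hvdiff
  have hWc : ContinuousAt W 0 :=
    huy_diff.continuousAt.comp ((Continuous.prodMk_right x0).continuousAt)
  have hTO : {t : ℝ | (x0, t) ∈ O} ∈ 𝓝 (0:ℝ) :=
    (hO.preimage (Continuous.prodMk_right x0)).mem_nhds hp
  have hφ0 : φ 0 = 0 := by
    have := hCR2 _ hp
    simp only [hφdef] at *
    rw [this]
    simp [hvp]
  have hslope : Tendsto (fun t => φ t / t) (𝓝[≠] (0:ℝ)) (𝓝 D) := by
    have h := hasDerivAt_iff_tendsto_slope.mp hφ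
    exact h.congr (fun t => by simp [slope_def_field, hφ0])
  have hVslope : Tendsto (fun t => v (x0, t) / t) (𝓝[≠] (0:ℝ)) (𝓝 c) := by
    have h := hasDerivAt_iff_tendsto_slope.mp hV
    exact h.congr (fun t => by simp [slope_def_field, hvp])
  set s : ℝ := Real.sqrt (c ^ 2 + 1) with hsdef
  have hspos : 0 < s := Real.sqrt_pos.mpr (by positivity)
  have sqrt_lim : ∀ (l : Filter ℝ), l ≤ 𝓝[≠] (0:ℝ) →
      Tendsto (fun t => Real.sqrt ((v (x0, t) / t) ^ 2 + 1)) l (𝓝 s) := by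
    intro l hl
    exact (Real.continuous_sqrt.tendsto _).comp
      (((hVslope.mono_left hl).pow 2).add tendsto_const_nhds)
  have hsubr : 𝓝[>] (0:ℝ) ≤ 𝓝[≠] (0:ℝ) := nhdsWithin_mono 0 (fun t ht => ne_of_gt ht)
  have hsubl : 𝓝[<] (0:ℝ) ≤ 𝓝[≠] (0:ℝ) := nhdsWithin_mono 0 (fun t ht => ne_of_lt ht)
  -- right limit
  have hDr : D = -2 * s * W 0 := by
    refine tendsto_nhds_unique ((hslope.mono_left hsubr).congr' ?_)
      ((tendsto_const_nhds.mul (sqrt_lim _ hsubr)).mul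
        (hWc.tendsto.mono_left nhdsWithin_le_nhds))
    filter_upwards [mem_nhdsWithin_of_mem_nhds hTO, self_mem_nhdsWithin] with t htO ht
    have ht0 : (0:ℝ) < t := ht
    have hne : t ≠ 0 := ne_of_gt ht0
    have hφt : φ t = -2 * Real.sqrt ((v (x0, t)) ^ 2 + t ^ 2) * W t := hCR2 _ htO
    have hsq : (v (x0, t)) ^ 2 + t ^ 2 = ((v (x0, t) / t) ^ 2 + 1) * t ^ 2 := by
      field_simp
    rw [hφt, hsq, Real.sqrt_mul (by positivity) (t ^ 2), Real.sqrt_sq ht0.le]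
    field_simp
    try ring
  -- left limit
  have hDl : D = 2 * s * W 0 := by
    refine tendsto_nhds_unique ((hslope.mono_left hsubl).congr' ?_)
      ((tendsto_const_nhds.mul (sqrt_lim _ hsubl)).mul
        (hWc.tendsto.mono_left nhdsWithin_le_nhds))
    filter_upwards [mem_nhdsWithin_of_mem_nhds hTO, self_mem_nhdsWithin] with t htO ht
    have ht0 : t < (0:ℝ) := ht
    have hne : t ≠ 0 := ne_of_lt ht0
    have hφt : φ t = -2 * Real.sqrt ((v (x0, t)) ^ 2 + t ^ 2) * W t := hCR2 _ htO
    have hsq : (v (x0, t)) ^ 2 + t ^ 2 = ((v (x0, t) / t) ^ 2 + 1) * t ^ 2 := by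
      field_simp
    rw [hφt, hsq, Real.sqrt_mul (by positivity) (t ^ 2), Real.sqrt_sq_eq_abs,
      abs_of_neg ht0]
    field_simp
    try ring
  have : -2 * s * W 0 = 2 * s * W 0 := hDr.symm.trans hDl
  have hW0 : W 0 = 0 := by nlinarith [hspos]
  exact hW0

/-- Proposition 3.4 (first half): `C²` solutions of the nonlinear Cauchy–Riemann system
satisfy the second-order quasilinear equation `Q(v) = 0` in the interior of `S`. -/
theorem stmt_17 (S U : Set (ℝ × ℝ)) (hS : IsCompact S) (hU : IsOpen U) (hSU : S ⊆ U)
    (a : ℝ) (u v : ℝ × ℝ → ℝ)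
    (hu : ContDiffOn ℝ 2 u U) (hv : ContDiffOn ℝ 2 v U)
    (hCR1 : ∀ p ∈ S, fderiv ℝ u p ((1 : ℝ), (0 : ℝ)) = fderiv ℝ v p ((0 : ℝ), (1 : ℝ)))
    (hCR2 : ∀ p ∈ S, fderiv ℝ v p ((1 : ℝ), (0 : ℝ)) =
      -2 * ((v p) ^ 2 + p.2 ^ 2 + a ^ 2) ^ ((1 : ℝ) / 2)
        * fderiv ℝ u p ((0 : ℝ), (1 : ℝ))) :
    ∀ p ∈ interior S, Qop a v p = 0 := by
  intro p hp
  have hO : IsOpen (interior S) := isOpen_interior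
  have hOS : interior S ⊆ S := interior_subset
  have hOU : interior S ⊆ U := hOS.trans hSU
  -- the coefficient identity on the interior
  have hfeq : ∀ q ∈ interior S,
      ((v q) ^ 2 + q.2 ^ 2 + a ^ 2) ^ (-(1 : ℝ) / 2) * fderiv ℝ v q ((1 : ℝ), (0 : ℝ))
        = -2 * fderiv ℝ u q ((0 : ℝ), (1 : ℝ)) := by
    intro q hq
    have hE0 : (0 : ℝ) ≤ (v q) ^ 2 + q.2 ^ 2 + a ^ 2 := by positivity
    rcases eq_or_lt_of_le hE0 with h0 | hpos
    · -- degenerate point: v q = 0, q.2 = 0, a = 0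
      have h1 : v q ^ 2 = 0 := by nlinarith [sq_nonneg (v q), sq_nonneg q.2, sq_nonneg a]
      have h2 : q.2 ^ 2 = 0 := by nlinarith [sq_nonneg (v q), sq_nonneg q.2, sq_nonneg a]
      have h3 : a ^ 2 = 0 := by nlinarith [sq_nonneg (v q), sq_nonneg q.2, sq_nonneg a]
      have hv0 : v q = 0 := by
        have := sq_eq_zero_iff.mp h1; exact this
      have hq2 : q.2 = 0 := sq_eq_zero_iff.mp h2
      have ha : a = 0 := sq_eq_zero_iff.mp h3
      have hCR2' : ∀ r ∈ interior S, fderiv ℝ v r ((1 : ℝ), (0 : ℝ)) =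
          -2 * Real.sqrt ((v r) ^ 2 + r.2 ^ 2) * fderiv ℝ u r ((0 : ℝ), (1 : ℝ)) := by
        intro r hr
        rw [hCR2 r (hOS hr), ha, Real.sqrt_eq_rpow]
        norm_num
      have hq0 : q = (q.1, (0 : ℝ)) := by
        ext
        · rfl
        · exact hq2
      have huy0 : fderiv ℝ u q ((0 : ℝ), (1 : ℝ)) = 0 := by
        rw [hq0]
        exact key_deg U hU u v hu hv (interior S) hO hOU hCR2' q.1
          (hq0 ▸ hq) (by rw [← hq0]; exact hv0)
      have hE : ((v q) ^ 2 + q.2 ^ 2 + a ^ 2 : ℝ) = 0 := h0.symm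
      rw [hE, huy0, Real.zero_rpow (by norm_num)]
      ring
    · rw [hCR2 q (hOS hq)]
      have h1 : ((v q) ^ 2 + q.2 ^ 2 + a ^ 2) ^ (-(1 : ℝ) / 2)
          * ((v q) ^ 2 + q.2 ^ 2 + a ^ 2) ^ ((1 : ℝ) / 2) = 1 := by
        rw [← Real.rpow_add hpos]; norm_num
      linear_combination (-2 * fderiv ℝ u q ((0 : ℝ), (1 : ℝ))) * h1
  -- regularity at p
  have hUmem : U ∈ 𝓝 p := hU.mem_nhds (hOU hp)
  have hu2 : ContDiffAt ℝ 2 u p := hu.contDiffAt hUmem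
  have huC1 : ContDiffOn ℝ 1 (fun q => fderiv ℝ u q) U := hu.fderiv_of_isOpen hU (by norm_num)
  have hdFu : DifferentiableAt ℝ (fderiv ℝ u) p := (huC1.contDiffAt hUmem).differentiableAt one_ne_zero
  have huy_diff : DifferentiableAt ℝ (fun q => fderiv ℝ u q ((0 : ℝ), (1 : ℝ))) p :=
    hdFu.clm_apply (differentiableAt_const _)
  have h1 : fderiv ℝ (fun q => ((v q) ^ 2 + q.2 ^ 2 + a ^ 2) ^ (-(1 : ℝ) / 2)
        * fderiv ℝ v q ((1 : ℝ), (0 : ℝ))) p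
      = fderiv ℝ (fun q => -2 * fderiv ℝ u q ((0 : ℝ), (1 : ℝ))) p := by
    apply Filter.EventuallyEq.fderiv_eq
    filter_upwards [hO.mem_nhds hp] with q hq using hfeq q hq
  have h2 : fderiv ℝ (fun q => -2 * fderiv ℝ u q ((0 : ℝ), (1 : ℝ))) p
      = (-2 : ℝ) • fderiv ℝ (fun q => fderiv ℝ u q ((0 : ℝ), (1 : ℝ))) p :=
    fderiv_const_mul huy_diff _
  have h3 := eval_fderiv_fderiv hdFu ((0 : ℝ), (1 : ℝ)) ((1 : ℝ), (0 : ℝ))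
  have hsym : IsSymmSndFDerivAt ℝ u p := hu2.isSymmSndFDerivAt (by norm_num)
  have h4 := hsym ((1 : ℝ), (0 : ℝ)) ((0 : ℝ), (1 : ℝ))
  have h5 := (eval_fderiv_fderiv hdFu ((1 : ℝ), (0 : ℝ)) ((0 : ℝ), (1 : ℝ))).symm
  have h6 : fderiv ℝ (fun q => fderiv ℝ u q ((1 : ℝ), (0 : ℝ))) p
      = fderiv ℝ (fun q => fderiv ℝ v q ((0 : ℝ), (1 : ℝ))) p := by
    apply Filter.EventuallyEq.fderiv_eq
    filter_upwards [hO.mem_nhds hp] with q hq using hCR1 q (hOS hq)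
  unfold Qop
  rw [h1, h2]
  simp only [ContinuousLinearMap.smul_apply, smul_eq_mul]
  rw [h3, h4, h5, h6]
  ring
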